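/- If G is triangle-free, then S[G,t] is triangle-free for every t ≥ 1. -/

import Mathlib

variable {V : Type*}

/-- Adjacency of the generalized Sierpiński graph `S(G,t)` on words of length `t`:
`u` and `v` are adjacent iff there is an index `i` with `u j = v j` for `j < i`,
`u i` adjacent to `v i` in `G`, and `u j = v i`, `v j = u i` for `j > i`. -/
def sierAdj (G : SimpleGraph V) (t : ℕ) (u v : Fin t → V) : Prop :=
  ∃ i : Fin t, (∀ j, j < i → u j = v j) ∧ G.Adj (u i) (v i) ∧
    ∀ j, i < j → u j = v i ∧ v j = u i

/-- The generalized Sierpiński graph `S(G,t)`. -/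
def sier (G : SimpleGraph V) (t : ℕ) : SimpleGraph (Fin t → V) where
  Adj := sierAdj G t
  symm := ⟨by
    rintro u v ⟨i, h1, h2, h3⟩
    exact ⟨i, fun j hj => (h1 j hj).symm, h2.symm,
      fun j hj => ⟨(h3 j hj).2, (h3 j hj).1⟩⟩⟩
  loopless := ⟨by
    rintro u ⟨i, h1, h2, h3⟩
    exact G.irrefl h2⟩

/-- `linkingAt G t p u v` : `uv` is a linking edge of `S(G,t)` appearing at
(0-indexed) position `p < t - 1`; in the paper's terminology this linking edge is
produced at step `t - p`, and its contraction is a vertex contracted at step `t - p`. -/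
def linkingAt (G : SimpleGraph V) (t p : ℕ) (u v : Fin t → V) : Prop :=
  ∃ i : Fin t, i.val = p ∧ i.val + 1 < t ∧ (∀ j, j < i → u j = v j) ∧
    G.Adj (u i) (v i) ∧ ∀ j, i < j → u j = v i ∧ v j = u i

/-- `uv` is a linking edge of `S(G,t)` (an edge appearing at some step `≥ 2`). -/
def linking (G : SimpleGraph V) (t : ℕ) (u v : Fin t → V) : Prop :=
  ∃ p, linkingAt G t p u v

/-- The equivalence relation on words generated by identifying the two endpoints
of each linking edge. -/
def gasketSetoid (G : SimpleGraph V) (t : ℕ) : Setoid (Fin t → V) :=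
  Relation.EqvGen.setoid (linking G t)

/-- The generalized Sierpiński gasket graph `S[G,t]`, obtained from `S(G,t)` by
contracting all linking edges. -/
def gasket (G : SimpleGraph V) (t : ℕ) :
    SimpleGraph (Quotient (gasketSetoid G t)) where
  Adj x y := x ≠ y ∧ ∃ u v, Quotient.mk (gasketSetoid G t) u = x ∧
    Quotient.mk (gasketSetoid G t) v = y ∧ sierAdj G t u v
  symm := ⟨by
    rintro x y ⟨hxy, u, v, hu, hv, h⟩
    exact ⟨hxy.symm, v, u, hv, hu, (sier G t).adj_symm h⟩⟩
  loopless := ⟨fun _ h => h.1 rfl⟩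

/-- The expanded word `i j j ... j`; for `ij ∈ E(G)` its class in `S[G,t]` is the
contracted vertex `{i,j}_t`. -/
def topWord (t : ℕ) (i j : V) : Fin t → V := fun k => if k.val = 0 then i else j

/-! ### Auxiliary lemmas -/

/-- Unfold `linking` into a single existential. -/
lemma linking_iff' {G : SimpleGraph V} {t : ℕ} {u v : Fin t → V} :
    linking G t u v ↔ ∃ i : Fin t, i.val + 1 < t ∧ (∀ j, j < i → u j = v j) ∧
      G.Adj (u i) (v i) ∧ ∀ j, i < j → u j = v i ∧ v j = u i := by
  constructor
  · rintro ⟨p, i, -, h⟩; exact ⟨i, h⟩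
  · rintro ⟨i, h⟩; exact ⟨i.val, i, rfl, h⟩

lemma link_symm' {G : SimpleGraph V} {t : ℕ} {u v : Fin t → V}
    (h : linking G t u v) : linking G t v u := by
  obtain ⟨i, hi, h1, h2, h3⟩ := linking_iff'.mp h
  exact linking_iff'.mpr ⟨i, hi, fun j hj => (h1 j hj).symm, h2.symm,
    fun j hj => ⟨(h3 j hj).2, (h3 j hj).1⟩⟩

/-- A word has at most one linking partner. -/
lemma link_unique' {G : SimpleGraph V} {t : ℕ} {u v w : Fin t → V}
    (h1 : linking G t u v) (h2 : linking G t u w) : v = w := by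
  obtain ⟨i, hbd, hpre, hadj, htail⟩ := linking_iff'.mp h1
  obtain ⟨i', hbd', hpre', hadj', htail'⟩ := linking_iff'.mp h2
  have key : ∀ (v' w' : Fin t → V) (a b : Fin t), a < b → b.val + 1 < t →
      (∀ j, a < j → u j = v' a) → G.Adj (u b) (w' b) →
      (∀ j, b < j → u j = w' b) → False := by
    intro v' w' a b hab hb hta hadjb htb
    have hb1 : b < (⟨b.val + 1, hb⟩ : Fin t) := by
      rw [Fin.lt_def]; exact Nat.lt_succ_self _
    have e : w' b = u b := by
      rw [← htb _ hb1, hta _ (lt_trans hab hb1), ← hta _ hab]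
    exact G.irrefl (e ▸ hadjb)
  have hii : i = i' := by
    rcases lt_trichotomy i i' with h | h | h
    · exact (key v w i i' h hbd' (fun j hj => (htail j hj).1) hadj'
        (fun j hj => (htail' j hj).1)).elim
    · exact h
    · exact (key w v i' i h hbd (fun j hj => (htail' j hj).1) hadj
        (fun j hj => (htail j hj).1)).elim
  subst hii
  funext j
  rcases lt_trichotomy j i with h | h | h
  · rw [← hpre j h, hpre' j h]
  · subst h
    have hj1 : j < (⟨j.val + 1, hbd⟩ : Fin t) := by
      rw [Fin.lt_def]; exact Nat.lt_succ_self _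
    rw [← (htail _ hj1).1, (htail' _ hj1).1]
  · rw [(htail j h).2, (htail' j h).2]

/-- The generated equivalence is just the reflexive closure of `linking`. -/
lemma eqv_iff' {G : SimpleGraph V} {t : ℕ} {u v : Fin t → V} :
    Relation.EqvGen (linking G t) u v ↔ u = v ∨ linking G t u v := by
  constructor
  · intro h
    induction h with
    | rel a b h => exact Or.inr h
    | refl a => exact Or.inl rfl
    | symm a b h ih =>
        rcases ih with rfl | h'
        · exact Or.inl rfl
        · exact Or.inr (link_symm' h')
    | trans a b c hab hbc ih1 ih2 =>
        rcases ih1 with rfl | h1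
        · exact ih2
        · rcases ih2 with rfl | h2
          · exact Or.inr h1
          · exact Or.inl (link_unique' (link_symm' h1) h2)
  · rintro (rfl | h)
    · exact Relation.EqvGen.refl _
    · exact Relation.EqvGen.rel _ _ h

/-- Every edge of the gasket is witnessed by a "terminal" edge of `S(G,t)`:
one whose linking position is the last coordinate. -/
lemma gasket_adj_witness {G : SimpleGraph V} {t : ℕ} (ht : 1 ≤ t)
    {x y : Quotient (gasketSetoid G t)} (h : (gasket G t).Adj x y) :
    ∃ u v : Fin t → V, Quotient.mk (gasketSetoid G t) u = x ∧
      Quotient.mk (gasketSetoid G t) v = y ∧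
      (∀ j : Fin t, j.val < t - 1 → u j = v j) ∧
      G.Adj (u ⟨t - 1, by omega⟩) (v ⟨t - 1, by omega⟩) := by
  obtain ⟨hne, u, v, hu, hv, i, h1, h2, h3⟩ := h
  by_cases hi : i.val + 1 < t
  · exfalso
    apply hne
    rw [← hu, ← hv, Quotient.eq]
    exact Relation.EqvGen.rel _ _ ⟨i.val, i, rfl, hi, h1, h2, h3⟩
  · have hieq : i.val = t - 1 := by have := i.isLt; omega
    refine ⟨u, v, hu, hv,
      fun j hj => h1 j (by rw [Fin.lt_def, hieq]; exact hj), ?_⟩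
    have e : (⟨t - 1, by omega⟩ : Fin t) = i := Fin.ext (by exact hieq.symm)
    rw [e]; exact h2

lemma tri_false {G : SimpleGraph V} (hG : G.CliqueFree 3) {x y z : V}
    (h1 : G.Adj x y) (h2 : G.Adj x z) (h3 : G.Adj y z) : False := by
  classical
  exact hG {x, y, z} (SimpleGraph.is3Clique_triple_iff.mpr ⟨h1, h2, h3⟩)

/-- if `G` is triangle-free then `S[G,t]` is triangle-free for every `t ≥ 1`. -/
theorem stmt_8 (G : SimpleGraph V) (hG : G.CliqueFree 3) (t : ℕ) (ht : 1 ≤ t) :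
    (gasket G t).CliqueFree 3 := by
  classical
  intro S hS
  rw [SimpleGraph.is3Clique_iff] at hS
  obtain ⟨x, y, z, hxy, hxz, hyz, -⟩ := hS
  set l : Fin t := ⟨t - 1, by omega⟩ with hl
  obtain ⟨a, b, hax, hby, hab, Hab⟩ := gasket_adj_witness ht hxy
  obtain ⟨B, c, hBy, hcz, hBc, HBc⟩ := gasket_adj_witness ht hyz
  obtain ⟨A, C, hAx, hCz, hAC, HAC⟩ := gasket_adj_witness ht hxz
  have hB : b = B ∨ linking G t b B := by
    have h : Quotient.mk (gasketSetoid G t) b = Quotient.mk (gasketSetoid G t) B := by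
      rw [hby, hBy]
    exact eqv_iff'.mp (Quotient.exact h)
  have hA : a = A ∨ linking G t a A := by
    have h : Quotient.mk (gasketSetoid G t) a = Quotient.mk (gasketSetoid G t) A := by
      rw [hax, hAx]
    exact eqv_iff'.mp (Quotient.exact h)
  have hC : c = C ∨ linking G t c C := by
    have h : Quotient.mk (gasketSetoid G t) c = Quotient.mk (gasketSetoid G t) C := by
      rw [hcz, hCz]
    exact eqv_iff'.mp (Quotient.exact h)
  clear hax hby hBy hcz hAx hCz hxy hxz hyz
  rcases hB with hBe | hBlink
  · -- b = B
    subst hBe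
    rcases hA with hAe | hAlink
    · subst hAe
      rcases hC with hCe | hClink
      · subst hCe
        exact tri_false hG Hab HAC HBc
      · -- linking c C at s
        obtain ⟨s, hs, hC1, hC2, hC3⟩ := linking_iff'.mp hClink
        have hsl : s.val < t - 1 := by omega
        have e : C s = c s := by
          calc C s = a s := (hAC s hsl).symm
            _ = b s := hab s hsl
            _ = c s := hBc s hsl
        rw [e] at hC2
        exact G.irrefl hC2
    · obtain ⟨r, hr, hA1, hA2, hA3⟩ := linking_iff'.mp hAlink
      have hrl : r.val < t - 1 := by omega
      have hrltl : r < l := hrl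
      rcases hC with hCe | hClink
      · -- linking a A at r, c = C
        subst hCe
        have e : A r = a r := by
          calc A r = c r := hAC r hrl
            _ = b r := (hBc r hrl).symm
            _ = a r := (hab r hrl).symm
        rw [e] at hA2
        exact G.irrefl hA2
      · obtain ⟨s, hs, hC1, hC2, hC3⟩ := linking_iff'.mp hClink
        have hsl : s.val < t - 1 := by omega
        have hsltl : s < l := hsl
        rcases lt_trichotomy r s with h | h | h
        · have e : A r = a r := by
            calc A r = C r := hAC r hrl
              _ = c r := (hC1 r h).symm
              _ = b r := (hBc r hrl).symm
              _ = a r := (hab r hrl).symm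
          rw [e] at hA2
          exact G.irrefl hA2
        · subst h
          have e : A l = C l := by
            calc A l = a r := (hA3 l hrltl).2
              _ = b r := hab r hrl
              _ = c r := hBc r hrl
              _ = C l := ((hC3 l hrltl).2).symm
          rw [e] at HAC
          exact G.irrefl HAC
        · have e : C s = c s := by
            calc C s = A s := (hAC s hsl).symm
              _ = a s := (hA1 s h).symm
              _ = b s := hab s hsl
              _ = c s := hBc s hsl
          rw [e] at hC2
          exact G.irrefl hC2
  · -- linking b B at p
    obtain ⟨p, hp, hB1, hB2, hB3⟩ := linking_iff'.mp hBlink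
    have hpl : p.val < t - 1 := by omega
    have hpltl : p < l := hpl
    have bl : b l = B p := (hB3 l hpltl).1
    have Bl : B l = b p := (hB3 l hpltl).2
    rcases hA with hAe | hAlink
    · subst hAe
      rcases hC with hCe | hClink
      · -- a = A, c = C
        subst hCe
        have e : b p = B p := by
          calc b p = a p := (hab p hpl).symm
            _ = c p := hAC p hpl
            _ = B p := (hBc p hpl).symm
        rw [e] at hB2
        exact G.irrefl hB2
      · obtain ⟨s, hs, hC1, hC2, hC3⟩ := linking_iff'.mp hClink
        have hsl : s.val < t - 1 := by omega
        have hsltl : s < l := hsl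
        rcases lt_trichotomy s p with h | h | h
        · have e : C s = c s := by
            calc C s = a s := (hAC s hsl).symm
              _ = b s := hab s hsl
              _ = B s := hB1 s h
              _ = c s := hBc s hsl
          rw [e] at hC2
          exact G.irrefl hC2
        · subst h
          have e : c l = B l := by
            calc c l = C s := (hC3 l hsltl).1
              _ = a s := (hAC s hsl).symm
              _ = b s := hab s hsl
              _ = B l := Bl.symm
          rw [e] at HBc
          exact G.irrefl HBc
        · have e : b p = B p := by
            calc b p = a p := (hab p hpl).symm
              _ = C p := hAC p hpl
              _ = c p := (hC1 p h).symm
              _ = B p := (hBc p hpl).symm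
          rw [e] at hB2
          exact G.irrefl hB2
    · obtain ⟨r, hr, hA1, hA2, hA3⟩ := linking_iff'.mp hAlink
      have hrl : r.val < t - 1 := by omega
      have hrltl : r < l := hrl
      have al : a l = A r := (hA3 l hrltl).1
      have Al : A l = a r := (hA3 l hrltl).2
      rcases hC with hCe | hClink
      · -- linking a A at r, c = C
        subst hCe
        rcases lt_trichotomy r p with h | h | h
        · have e : A r = a r := by
            calc A r = c r := hAC r hrl
              _ = B r := (hBc r hrl).symm
              _ = b r := (hB1 r h).symm
              _ = a r := (hab r hrl).symm
          rw [e] at hA2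
          exact G.irrefl hA2
        · subst h
          have e : a l = b l := by
            calc a l = A r := al
              _ = c r := hAC r hrl
              _ = B r := (hBc r hrl).symm
              _ = b l := by rw [bl]
          rw [e] at Hab
          exact G.irrefl Hab
        · have e : b p = B p := by
            calc b p = a p := (hab p hpl).symm
              _ = A p := hA1 p h
              _ = c p := hAC p hpl
              _ = B p := (hBc p hpl).symm
          rw [e] at hB2
          exact G.irrefl hB2
      · obtain ⟨s, hs, hC1, hC2, hC3⟩ := linking_iff'.mp hClink
        have hsl : s.val < t - 1 := by omega
        have hsltl : s < l := hsl
        have cl : c l = C s := (hC3 l hsltl).1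
        have Cl : C l = c s := (hC3 l hsltl).2
        rcases lt_trichotomy r s with hrs | hrs | hrs
        · -- r < s
          rcases lt_trichotomy r p with h | h | h
          · have e : A r = a r := by
              calc A r = C r := hAC r hrl
                _ = c r := (hC1 r hrs).symm
                _ = B r := (hBc r hrl).symm
                _ = b r := (hB1 r h).symm
                _ = a r := (hab r hrl).symm
            rw [e] at hA2
            exact G.irrefl hA2
          · subst h
            have e : a l = b l := by
              calc a l = A r := al
                _ = C r := hAC r hrl
                _ = c r := (hC1 r hrs).symm
                _ = B r := (hBc r hrl).symm
                _ = b l := by rw [bl]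
            rw [e] at Hab
            exact G.irrefl Hab
          · have e : b p = B p := by
              calc b p = a p := (hab p hpl).symm
                _ = A p := hA1 p h
                _ = C p := hAC p hpl
                _ = c p := (hC1 p (h.trans hrs)).symm
                _ = B p := (hBc p hpl).symm
            rw [e] at hB2
            exact G.irrefl hB2
        · -- r = s
          subst hrs
          rcases lt_trichotomy r p with h | h | h
          · have e : A l = C l := by
              calc A l = a r := Al
                _ = b r := hab r hrl
                _ = B r := hB1 r h
                _ = c r := hBc r hrl
                _ = C l := Cl.symm
            rw [e] at HAC
            exact G.irrefl HAC
          · -- r = s = p : the triangle case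
            subst h
            have e1 : a l = c l := by
              calc a l = A r := al
                _ = C r := hAC r hrl
                _ = c l := cl.symm
            have h1 : G.Adj (a l) (b l) := Hab
            have h2 : G.Adj (a l) (B l) := by rw [e1]; exact HBc.symm
            have h3 : G.Adj (b l) (B l) := by rw [bl, Bl]; exact hB2.symm
            exact tri_false hG h1 h2 h3
          · have e : b p = B p := by
              calc b p = a p := (hab p hpl).symm
                _ = A p := hA1 p h
                _ = C p := hAC p hpl
                _ = c p := (hC1 p h).symm
                _ = B p := (hBc p hpl).symm
            rw [e] at hB2
            exact G.irrefl hB2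
        · -- s < r
          rcases lt_trichotomy s p with h | h | h
          · have e : C s = c s := by
              calc C s = A s := (hAC s hsl).symm
                _ = a s := (hA1 s hrs).symm
                _ = b s := hab s hsl
                _ = B s := hB1 s h
                _ = c s := hBc s hsl
            rw [e] at hC2
            exact G.irrefl hC2
          · subst h
            have e : c l = B l := by
              calc c l = C s := cl
                _ = A s := (hAC s hsl).symm
                _ = a s := (hA1 s hrs).symm
                _ = b s := hab s hsl
                _ = B l := Bl.symm
            rw [e] at HBc
            exact G.irrefl HBc
          · have e : b p = B p := by
              calc b p = a p := (hab p hpl).symm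
                _ = A p := hA1 p (h.trans hrs)
                _ = C p := hAC p hpl
                _ = c p := (hC1 p h).symm
                _ = B p := (hBc p hpl).symm
            rw [e] at hB2
            exact G.irrefl hB2
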